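/- Let G be a strictly chordal graph and S a minimal vertex separator of G with |S| ≥ 2. If v ∈ S has degree d(v), then d(v) + 1 is a Laplacian eigenvalue of L(G) with multiplicity at least |S| - 1. -/

import Mathlib

open SimpleGraph Matrix

/-- `S` separates `u` and `v` in `G`: every walk from `u` to `v` meets `S`. -/
def Separates {V : Type*} (G : SimpleGraph V) (u v : V) (S : Set V) : Prop :=
  ∀ p : G.Walk u v, ∃ x ∈ p.support, x ∈ S

/-- `S` is a minimal `uv`-separator. -/
def IsMinimalUVSeparator {V : Type*} (G : SimpleGraph V) (u v : V) (S : Set V) : Prop :=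
  u ≠ v ∧ ¬ G.Adj u v ∧ u ∉ S ∧ v ∉ S ∧ Separates G u v S ∧
    ∀ S' ⊂ S, ¬ Separates G u v S'

/-- `S` is a minimal vertex separator: a minimal `uv`-separator for some non-adjacent pair. -/
def IsMinimalVertexSeparator {V : Type*} (G : SimpleGraph V) (S : Set V) : Prop :=
  ∃ u v, IsMinimalUVSeparator G u v S

/-- `G` is chordal: it has no induced cycle of length at least 4. -/
def Chordal {V : Type*} (G : SimpleGraph V) : Prop :=
  ∀ n, 4 ≤ n → ¬ ∃ f : Fin n ↪ V, ∀ a b, (SimpleGraph.cycleGraph n).Adj a b ↔ G.Adj (f a) (f b)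

/-- `G` is strictly chordal: chordal with pairwise disjoint minimal vertex separators. -/
def StrictlyChordal {V : Type*} (G : SimpleGraph V) : Prop :=
  Chordal G ∧ ∀ S S' : Set V, IsMinimalVertexSeparator G S →
    IsMinimalVertexSeparator G S' → S ≠ S' → Disjoint S S'
section helpers
variable {V : Type*} [DecidableEq V] {G : SimpleGraph V}

/-- existence of a minimal separating subset -/
lemma exists_minimal_subset {α : Type*} (P : Set α → Prop) (A : Set α) (hfin : A.Finite)
    (hPA : P A) : ∃ B, B ⊆ A ∧ P B ∧ ∀ C, C ⊂ B → ¬ P C := by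
  classical
  obtain ⟨n, hn⟩ : ∃ n, A.ncard ≤ n := ⟨A.ncard, le_rfl⟩
  induction n generalizing A with
  | zero =>
    refine ⟨A, le_rfl, hPA, fun C hC _ => ?_⟩
    have hA : A = ∅ := (Set.ncard_eq_zero hfin).mp (Nat.le_zero.mp hn)
    rw [hA] at hC
    exact hC.2 (Set.empty_subset C)
  | succ n ih =>
    by_cases h : ∃ C, C ⊂ A ∧ P C
    · obtain ⟨C, hCA, hPC⟩ := h
      have hlt : C.ncard < A.ncard := Set.ncard_lt_ncard hCA hfin
      obtain ⟨B, hBC, hPB, hmin⟩ := ih C (hfin.subset hCA.subset) hPC (by omega)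
      exact ⟨B, hBC.trans hCA.subset, hPB, hmin⟩
    · exact ⟨A, le_rfl, hPA, fun C hC hPC => h ⟨C, hC, hPC⟩⟩

/-- `x` can reach `y` avoiding `S`. -/
def SideOf (G : SimpleGraph V) (S : Set V) (y x : V) : Prop :=
  ∃ p : G.Walk x y, ∀ z ∈ p.support, z ∉ S

lemma SideOf.of_adj {S : Set V} {y x z : V} (h : SideOf G S y x) (hzx : G.Adj z x)
    (hz : z ∉ S) : SideOf G S y z := by
  obtain ⟨p, hp⟩ := h
  refine ⟨Walk.cons hzx p, ?_⟩
  intro w hw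
  rw [Walk.support_cons, List.mem_cons] at hw
  rcases hw with rfl | hw
  · exact hz
  · exact hp w hw

lemma SideOf.refl {S : Set V} {y : V} (hy : y ∉ S) : SideOf G S y y :=
  ⟨Walk.nil, by simp [hy]⟩

lemma not_both_sides {S : Set V} {u v x : V} (hmu : IsMinimalUVSeparator G u v S) :
    ¬ (SideOf G S u x ∧ SideOf G S v x) := by
  rintro ⟨⟨p, hp⟩, ⟨q, hq⟩⟩
  obtain ⟨z, hz, hzS⟩ := hmu.2.2.2.2.1 (p.reverse.append q)
  rw [Walk.mem_support_append_iff] at hz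
  rcases hz with hz | hz
  · exact hp z (by rwa [Walk.support_reverse, List.mem_reverse] at hz) hzS
  · exact hq z hz hzS

/-- From minimality, each `a ∈ S` has a nodup walk to each of `u, v` meeting `S` only at `a`. -/
lemma escape_to {S : Set V} {u v a : V} (hmu : IsMinimalUVSeparator G u v S) (ha : a ∈ S)
    {y : V} (hy : y = u ∨ y = v) :
    ∃ q : G.Walk a y, q.support.Nodup ∧ ∀ z ∈ q.support, z ∈ S → z = a := by
  classical
  have hss : S \ {a} ⊂ S := Set.sdiff_singleton_ssubset.mpr ha
  have hns := hmu.2.2.2.2.2 (S \ {a}) hss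
  rw [Separates] at hns
  push_neg at hns
  obtain ⟨p, hp⟩ := hns
  have hp' : ∀ z ∈ p.support, z ∈ S → z = a := by
    intro z hz hzS
    have := hp z hz
    by_contra hne
    exact this ⟨hzS, hne⟩
  have hap : a ∈ p.support := by
    obtain ⟨z, hz, hzS⟩ := hmu.2.2.2.2.1 p
    rwa [hp' z hz hzS] at hz
  rcases hy with rfl | rfl
  · have hap' : a ∈ p.reverse.support := by rwa [Walk.support_reverse, List.mem_reverse]
    refine ⟨(p.reverse.dropUntil a hap').bypass, (Walk.bypass_isPath _).support_nodup, ?_⟩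
    intro z hz hzS
    have : z ∈ p.support := by
      have := p.reverse.support_dropUntil_subset hap'
        (Walk.support_bypass_subset _ hz)
      rwa [Walk.support_reverse, List.mem_reverse] at this
    exact hp' z this hzS
  · refine ⟨(p.dropUntil a hap).bypass, (Walk.bypass_isPath _).support_nodup, ?_⟩
    intro z hz hzS
    exact hp' z (p.support_dropUntil_subset hap (Walk.support_bypass_subset _ hz)) hzS

/-- From a nodup walk meeting `S` only at its start, later vertices are on the `y` side. -/
lemma suffix_side {S : Set V} {a y : V} (q : G.Walk a y) (hnd : q.support.Nodup)
    (hq : ∀ z ∈ q.support, z ∈ S → z = a) {z : V} (hz : z ∈ q.support) (hza : z ≠ a) :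
    SideOf G S y z := by
  refine ⟨q.dropUntil z hz, ?_⟩
  intro w hw hwS
  have hwq : w ∈ q.support := q.support_dropUntil_subset hz hw
  have hwa : w = a := hq w hwq hwS
  subst hwa
  have hsupp : q.support = (q.takeUntil z hz).support ++ (q.dropUntil z hz).support.tail := by
    conv_lhs => rw [← q.take_spec hz]
    rw [Walk.support_append]
  rw [hsupp, List.nodup_append] at hnd
  have h1 : w ∈ (q.takeUntil z hz).support := Walk.start_mem_support _
  have h2 : w ∈ (q.dropUntil z hz).support.tail := by
    have hc := Walk.support_eq_cons (q.dropUntil z hz)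
    rw [hc, List.mem_cons] at hw
    rcases hw with rfl | hw
    · exact absurd rfl hza
    · exact hw
  exact hnd.2.2 w h1 w h2 rfl

end helpers


section twin
variable {V : Type*} [DecidableEq V] [Finite V] {G : SimpleGraph V}

/-- Key lemma: a neighbor outside `S` of one vertex of a minimal separator `S`
is a neighbor of every vertex of `S`. -/
lemma twin_adj (hsc : StrictlyChordal G) {S : Set V} (hS : IsMinimalVertexSeparator G S)
    {a b x : V} (ha : a ∈ S) (hb : b ∈ S) (hx : x ∉ S) (hxa : G.Adj x a) : G.Adj x b := by
  classical
  obtain ⟨u, v, hmu⟩ := hS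
  -- choose y ∈ {u, v} with ¬ SideOf G S y x
  obtain ⟨y, hyuv, hy⟩ : ∃ y, (y = u ∨ y = v) ∧ ¬ SideOf G S y x := by
    by_cases h : SideOf G S u x
    · exact ⟨v, Or.inr rfl, fun h' => not_both_sides hmu ⟨h, h'⟩⟩
    · exact ⟨u, Or.inl rfl, h⟩
  have hyS : y ∉ S := by rcases hyuv with rfl | rfl; exacts [hmu.2.2.1, hmu.2.2.2.1]
  have hxy : x ≠ y := fun h => hy (by rw [h]; exact SideOf.refl hyS)
  have hxy' : ¬ G.Adj x y := fun h => hy ((SideOf.refl hyS).of_adj h hx)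
  -- N(x) separates x from y
  have hsepN : Separates G x y {z | G.Adj x z} := by
    intro p
    cases p with
    | nil => exact absurd rfl hxy
    | cons h q => exact ⟨_, by simp [Walk.support_cons, Walk.start_mem_support], h⟩
  obtain ⟨S'', hsub, hsep'', hmin''⟩ :=
    exists_minimal_subset (Separates G x y) {z | G.Adj x z} (Set.toFinite _) hsepN
  have hS''min : IsMinimalUVSeparator G x y S'' :=
    ⟨hxy, hxy', fun h => G.irrefl (hsub h), fun h => hxy' (hsub h), hsep'', hmin''⟩
  by_cases hbS'' : b ∈ S''
  · exact hsub hbS''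
  · -- S'' ≠ S, so disjoint from S, so a ∉ S''
    have hne : S'' ≠ S := fun h => hbS'' (h ▸ hb)
    have hdisj : Disjoint S'' S := hsc.2 S'' S ⟨x, y, hS''min⟩ ⟨u, v, hmu⟩ hne
    have haS'' : a ∉ S'' := fun h => (Set.disjoint_left.mp hdisj h) ha
    obtain ⟨q, hnd, hq⟩ := escape_to hmu ha hyuv
    obtain ⟨z, hz, hzS''⟩ := hsep'' (Walk.cons hxa q)
    rw [Walk.support_cons, List.mem_cons] at hz
    rcases hz with rfl | hz
    · exact absurd (hsub hzS'') (G.irrefl)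
    · rcases eq_or_ne z a with rfl | hza
      · exact absurd hzS'' haS''
      · have hside : SideOf G S y z := suffix_side q hnd hq hz hza
        exact absurd (hside.of_adj (hsub hzS'') hx) hy
end twin

section clique
variable {V : Type*} [DecidableEq V] [Finite V] {G : SimpleGraph V}

/-- Each vertex of a minimal separator has a neighbor outside `S` on the `y`-side. -/
lemma exists_side_neighbor {S : Set V} {u v b : V} (hmu : IsMinimalUVSeparator G u v S)
    (hb : b ∈ S) {y : V} (hy : y = u ∨ y = v) :
    ∃ w, G.Adj b w ∧ w ∉ S ∧ SideOf G S y w := by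
  obtain ⟨q, hnd, hq⟩ := escape_to hmu hb hy
  have hby : b ≠ y := by
    rcases hy with rfl | rfl
    · exact fun h => hmu.2.2.1 (h ▸ hb)
    · exact fun h => hmu.2.2.2.1 (h ▸ hb)
  cases q with
  | nil => exact absurd rfl hby
  | @cons _ w _ h r =>
    have hwr : w ∈ (Walk.cons h r).support := by simp [Walk.support_cons, Walk.start_mem_support]
    have hwS : w ∉ S := by
      intro hwS'
      have := hq w hwr hwS'
      exact G.irrefl (this ▸ h)
    have hwb : w ≠ b := fun hh => G.irrefl (hh ▸ h)
    exact ⟨w, h, hwS, suffix_side (Walk.cons h r) hnd hq hwr hwb⟩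

/-- Vertices of a minimal vertex separator in a strictly chordal graph are pairwise adjacent. -/
lemma sep_clique (hsc : StrictlyChordal G) {S : Set V} (hS : IsMinimalVertexSeparator G S)
    {a b : V} (ha : a ∈ S) (hb : b ∈ S) (hab : a ≠ b) : G.Adj a b := by
  classical
  by_contra hnab
  obtain ⟨u, v, hmu⟩ := hS
  obtain ⟨w, hbw, hwS, hwu⟩ := exists_side_neighbor hmu hb (Or.inl rfl)
  obtain ⟨w', hbw', hw'S, hw'v⟩ := exists_side_neighbor hmu hb (Or.inr rfl)
  have haw : G.Adj w a := twin_adj hsc ⟨u, v, hmu⟩ hb ha hwS hbw.symm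
  have haw' : G.Adj w' a := twin_adj hsc ⟨u, v, hmu⟩ hb ha hw'S hbw'.symm
  have hww' : w ≠ w' := by
    rintro rfl
    exact not_both_sides hmu ⟨hwu, hw'v⟩
  have hnww' : ¬ G.Adj w w' := by
    intro h
    exact not_both_sides hmu ⟨hwu, hw'v.of_adj h hwS⟩
  have haw_ne : a ≠ w := fun h => hwS (h ▸ ha)
  have haw'_ne : a ≠ w' := fun h => hw'S (h ▸ ha)
  have hbw_ne : b ≠ w := fun h => hwS (h ▸ hb)
  have hbw'_ne : b ≠ w' := fun h => hw'S (h ▸ hb)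
  -- build the induced 4-cycle a - w - b - w' - a
  refine hsc.1 4 le_rfl ⟨⟨fun i => match i with | 0 => a | 1 => w | 2 => b | 3 => w', ?_⟩, ?_⟩
  · intro i j hij
    fin_cases i <;> fin_cases j <;>
      first
        | rfl
        | exact absurd hij hab | exact absurd hij.symm hab
        | exact absurd hij haw_ne | exact absurd hij.symm haw_ne
        | exact absurd hij haw'_ne | exact absurd hij.symm haw'_ne
        | exact absurd hij hbw_ne | exact absurd hij.symm hbw_ne
        | exact absurd hij hbw'_ne | exact absurd hij.symm hbw'_ne
        | exact absurd hij hww' | exact absurd hij.symm hww'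
  · intro i j
    fin_cases i <;> fin_cases j <;>
      first
        | exact iff_of_false (by decide) (G.irrefl)
        | exact iff_of_true (by decide) haw.symm
        | exact iff_of_true (by decide) haw
        | exact iff_of_true (by decide) hbw.symm
        | exact iff_of_true (by decide) hbw
        | exact iff_of_true (by decide) hbw'
        | exact iff_of_true (by decide) hbw'.symm
        | exact iff_of_true (by decide) haw'
        | exact iff_of_true (by decide) haw'.symm
        | exact iff_of_false (by decide) hnab
        | exact iff_of_false (by decide) (fun h => hnab h.symm)
        | exact iff_of_false (by decide) hnww'
        | exact iff_of_false (by decide) (fun h => hnww' h.symm)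
end clique

/-- The multiplicity of `μ` as a Laplacian eigenvalue of `G`. -/
noncomputable def lapMult {V : Type*} [Fintype V] [DecidableEq V] (G : SimpleGraph V)
    [DecidableRel G.Adj] (μ : ℝ) : ℕ :=
  Module.finrank ℝ (Module.End.eigenspace (Matrix.toLin' (G.lapMatrix ℝ)) μ)
/-- In a strictly chordal graph, for a minimal vertex separator `S` with `|S| ≥ 2` and
`v ∈ S`, `d(v) + 1` is a Laplacian eigenvalue of multiplicity at least `|S| - 1`. -/
theorem stmt_11 {V : Type*} [Fintype V] [DecidableEq V] (G : SimpleGraph V)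
    [DecidableRel G.Adj] (hsc : StrictlyChordal G) (S : Set V)
    (hS : IsMinimalVertexSeparator G S) (h2 : 2 ≤ S.ncard) (v : V) (hv : v ∈ S) :
    S.ncard - 1 ≤ lapMult G ((G.degree v : ℝ) + 1) := by
  classical
  have htwin : ∀ w ∈ S, ∀ i, i ≠ v → i ≠ w → (G.Adj i v ↔ G.Adj i w) := by
    intro w hw i hiv hiw
    by_cases hiS : i ∈ S
    · exact ⟨fun _ => sep_clique hsc hS hiS hw hiw, fun _ => sep_clique hsc hS hiS hv hiv⟩
    · exact ⟨fun h => twin_adj hsc hS hv hw hiS h, fun h => twin_adj hsc hS hw hv hiS h⟩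
  have hdeg : ∀ w, w ∈ S → w ≠ v → G.degree w = G.degree v := by
    intro w hw hwv
    have hvw : G.Adj v w := sep_clique hsc hS hv hw (Ne.symm hwv)
    have hkey : (G.neighborFinset w).erase v = (G.neighborFinset v).erase w := by
      ext i
      simp only [Finset.mem_erase, mem_neighborFinset]
      constructor
      · rintro ⟨hiv, hadj⟩
        have hiw : i ≠ w := fun h => G.irrefl (h ▸ hadj)
        exact ⟨hiw, ((htwin w hw i hiv hiw).mpr hadj.symm).symm⟩
      · rintro ⟨hiw, hadj⟩
        have hiv : i ≠ v := fun h => G.irrefl (h ▸ hadj)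
        exact ⟨hiv, ((htwin w hw i hiv hiw).mp hadj.symm).symm⟩
    have h1 : ((G.neighborFinset w).erase v).card + 1 = (G.neighborFinset w).card :=
      Finset.card_erase_add_one (by rw [mem_neighborFinset]; exact hvw.symm)
    have h2' : ((G.neighborFinset v).erase w).card + 1 = (G.neighborFinset v).card :=
      Finset.card_erase_add_one (by rw [mem_neighborFinset]; exact hvw)
    rw [← G.card_neighborFinset_eq_degree, ← G.card_neighborFinset_eq_degree, ← h1, ← h2', hkey]
  -- the eigenvectors
  have hsum : ∀ (w c : V), (∑ u ∈ G.neighborFinset c, ((Pi.single v (1:ℝ) - Pi.single w 1 : V → ℝ) u))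
      = (if v ∈ G.neighborFinset c then (1:ℝ) else 0)
        - (if w ∈ G.neighborFinset c then (1:ℝ) else 0) := by
    intro w c
    simp only [Pi.sub_apply]
    rw [Finset.sum_sub_distrib]
    simp only [Pi.single_apply]
    rw [Finset.sum_ite_eq', Finset.sum_ite_eq']
  have hmem : ∀ w, w ∈ S → w ≠ v →
      ((Pi.single v (1:ℝ) - Pi.single w 1 : V → ℝ)) ∈
        Module.End.eigenspace (Matrix.toLin' (G.lapMatrix ℝ)) ((G.degree v : ℝ) + 1) := by
    intro w hw hwv
    have hvw : G.Adj v w := sep_clique hsc hS hv hw (Ne.symm hwv)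
    rw [Module.End.mem_eigenspace_iff, Matrix.toLin'_apply]
    funext i
    show (G.lapMatrix ℝ *ᵥ _) i = _
    rw [lapMatrix_mulVec_apply, hsum w i]
    simp only [Pi.smul_apply, Pi.sub_apply, Pi.single_apply, smul_eq_mul]
    by_cases hiv : i = v
    · subst hiv
      have h1 : i ∉ G.neighborFinset i := by simp
      have h2 : w ∈ G.neighborFinset i := by rwa [mem_neighborFinset]
      rw [if_pos rfl, if_neg (Ne.symm hwv), if_neg h1, if_pos h2]
      ring
    by_cases hiw : i = w
    · subst hiw
      have h1 : v ∈ G.neighborFinset i := by rw [mem_neighborFinset]; exact hvw.symm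
      have h2 : i ∉ G.neighborFinset i := by simp
      rw [hdeg i hw hwv, if_neg hwv, if_pos rfl, if_pos h1, if_neg h2]
      ring
    · have hcond : (v ∈ G.neighborFinset i) ↔ (w ∈ G.neighborFinset i) := by
        rw [mem_neighborFinset, mem_neighborFinset]
        exact htwin w hw i hiv hiw
      rw [if_neg hiv, if_neg hiw, if_congr hcond rfl rfl]
      ring
  set T : Set V := S \ {v} with hT
  haveI : Fintype ↥T := Fintype.ofFinite _
  have hne : ∀ w : ↥T, (w : V) ≠ v := fun w h => w.2.2 (by simp [h])
  have hindep : LinearIndependent ℝ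
      (fun w : ↥T => ((Pi.single v (1:ℝ) - Pi.single (w : V) 1 : V → ℝ))) := by
    rw [Fintype.linearIndependent_iff]
    intro g hg w0
    have happ := congrFun hg (w0 : V)
    rw [Finset.sum_apply] at happ
    simp only [Pi.smul_apply, Pi.sub_apply, Pi.single_apply, smul_eq_mul, Pi.zero_apply] at happ
    have hrw : ∀ w : ↥T, g w * ((if ((w0:V) = v) then (1:ℝ) else 0)
        - if ((w0:V) = (w:V)) then 1 else 0) = if w = w0 then -g w else 0 := by
      intro w
      rw [if_neg (hne w0)]
      rcases eq_or_ne w w0 with rfl | h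
      · rw [if_pos rfl, if_pos rfl]; ring
      · rw [if_neg (fun hh => h (Subtype.ext hh.symm)), if_neg h]; ring
    rw [Finset.sum_congr rfl (fun w _ => hrw w), Finset.sum_ite_eq'] at happ
    simp only [Finset.mem_univ, if_pos] at happ
    linarith [happ]
  have hcard : Fintype.card ↥T ≤ lapMult G ((G.degree v : ℝ) + 1) := by
    let E := Module.End.eigenspace (Matrix.toLin' (G.lapMatrix ℝ)) ((G.degree v : ℝ) + 1)
    let F : ↥T → E := fun w => ⟨_, hmem (w : V) w.2.1 (hne w)⟩
    have hF : LinearIndependent ℝ F := by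
      apply LinearIndependent.of_comp E.subtype
      exact hindep
    exact hF.fintype_card_le_finrank
  have e1 : T.ncard = Fintype.card ↥T := by
    rw [← Nat.card_coe_set_eq, Nat.card_eq_fintype_card]
  have e2 : T.ncard = S.ncard - 1 := Set.ncard_diff_singleton_of_mem hv
  omega
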